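/- arXiv:2203.09751 — 2 statements merged into one kernel-verified Lean document; each statement's English description precedes it below -/
import Mathlib

section
/- For all real a and b, ∫_{-∞}^{∞} Φ(a + b·x)² φ(x) dx = Φ(a/√(1+b²)) − 2·T(a/√(1+b²), 1/√(1+2b²)), where T is Owen's T function. -/
open MeasureTheory Real

/-- Standard normal density. -/
noncomputable def stdPdf (x : ℝ) : ℝ := (Real.sqrt (2 * Real.pi))⁻¹ * Real.exp (-x ^ 2 / 2)

/-- Standard normal CDF. -/
noncomputable def stdCdf (t : ℝ) : ℝ := ∫ s in Set.Iic t, stdPdf s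

/-- Owen's T function. -/
noncomputable def owenT (h a : ℝ) : ℝ :=
  (2 * Real.pi)⁻¹ * ∫ x in (0:ℝ)..a, Real.exp (-h ^ 2 * (1 + x ^ 2) / 2) / (1 + x ^ 2)

/-- Standard bivariate normal density with correlation ρ. -/
noncomputable def bvnPdf (ρ x y : ℝ) : ℝ :=
  Real.exp (-(x ^ 2 - 2 * ρ * x * y + y ^ 2) / (2 * (1 - ρ ^ 2))) /
    (2 * Real.pi * Real.sqrt (1 - ρ ^ 2))

/-- Standard bivariate normal CDF with correlation ρ. -/
noncomputable def bvn (u v ρ : ℝ) : ℝ :=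
  ∫ p : ℝ × ℝ in Set.Iic u ×ˢ Set.Iic v, bvnPdf ρ p.1 p.2

/-- General bivariate Gaussian density with means μ₁ μ₂, std devs σ₁ σ₂, covariance σ₁₂. -/
noncomputable def biGaussPdf (μ₁ μ₂ σ₁ σ₂ σ₁₂ x y : ℝ) : ℝ :=
  Real.exp (-(σ₂ ^ 2 * (x - μ₁) ^ 2 - 2 * σ₁₂ * (x - μ₁) * (y - μ₂) + σ₁ ^ 2 * (y - μ₂) ^ 2) /
      (2 * (σ₁ ^ 2 * σ₂ ^ 2 - σ₁₂ ^ 2))) /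
    (2 * Real.pi * Real.sqrt (σ₁ ^ 2 * σ₂ ^ 2 - σ₁₂ ^ 2))

section OwenProof

open MeasureTheory Real Set Filter Metric

set_option linter.unnecessarySeqFocus false

lemma sqrt2pi_pos : 0 < Real.sqrt (2 * Real.pi) := Real.sqrt_pos.2 (by positivity)

lemma stdPdf_pos (x : ℝ) : 0 < stdPdf x := by
  unfold stdPdf; positivity

lemma stdPdf_le (x : ℝ) : stdPdf x ≤ (Real.sqrt (2 * Real.pi))⁻¹ := by
  unfold stdPdf
  have h1 : Real.exp (-x ^ 2 / 2) ≤ 1 := Real.exp_le_one_iff.2 (by nlinarith [sq_nonneg x])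
  have h2 : (0:ℝ) < (Real.sqrt (2 * Real.pi))⁻¹ := inv_pos.2 sqrt2pi_pos
  nlinarith

lemma continuous_stdPdf : Continuous stdPdf := by
  unfold stdPdf; continuity

lemma stdPdf_alt : stdPdf = fun x => (Real.sqrt (2 * Real.pi))⁻¹ * Real.exp (-(1/2) * x ^ 2) := by
  funext x; unfold stdPdf; congr 1; ring_nf

lemma integrable_stdPdf : Integrable stdPdf := by
  rw [stdPdf_alt]
  exact (integrable_exp_neg_mul_sq (by norm_num : (0:ℝ) < 1/2)).const_mul _

lemma integral_stdPdf : ∫ x, stdPdf x = 1 := by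
  rw [stdPdf_alt]
  rw [MeasureTheory.integral_const_mul, integral_gaussian]
  rw [show Real.pi / (1/2) = 2 * Real.pi by ring]
  field_simp

lemma stdPdf_neg (x : ℝ) : stdPdf (-x) = stdPdf x := by unfold stdPdf; ring_nf

lemma stdCdf_nonneg (t : ℝ) : 0 ≤ stdCdf t :=
  integral_nonneg fun x => (stdPdf_pos x).le

lemma stdCdf_le_one (t : ℝ) : stdCdf t ≤ 1 := by
  rw [← integral_stdPdf]
  exact setIntegral_le_integral integrable_stdPdf (Filter.Eventually.of_forall fun x => (stdPdf_pos x).le)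

lemma stdCdf_add_neg (t : ℝ) : stdCdf t + stdCdf (-t) = 1 := by
  have h1 : stdCdf (-t) = ∫ x in Set.Ioi t, stdPdf x := by
    unfold stdCdf
    have := integral_comp_neg_Iic (-t) stdPdf
    simp only [stdPdf_neg, neg_neg] at this
    exact this
  rw [h1, ← integral_stdPdf]
  exact intervalIntegral.integral_Iic_add_Ioi integrable_stdPdf.integrableOn
    integrable_stdPdf.integrableOn

lemma stdCdf_zero : stdCdf 0 = 1/2 := by
  have := stdCdf_add_neg 0
  rw [neg_zero] at this; linarith

lemma stdCdf_neg_eq (t : ℝ) : stdCdf (-t) = 1 - stdCdf t := by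
  have := stdCdf_add_neg t; linarith

lemma stdCdf_eq_add (t : ℝ) : stdCdf t = stdCdf 0 + ∫ u in (0:ℝ)..t, stdPdf u := by
  have := intervalIntegral.integral_Iic_sub_Iic (f := stdPdf) (μ := volume) (a := (0:ℝ)) (b := t)
    integrable_stdPdf.integrableOn integrable_stdPdf.integrableOn
  unfold stdCdf; linarith

lemma hasDerivAt_stdCdf (t : ℝ) : HasDerivAt stdCdf (stdPdf t) t := by
  have h : ∀ s, stdCdf s = stdCdf 0 + ∫ u in (0:ℝ)..s, stdPdf u := stdCdf_eq_add
  have hd : HasDerivAt (fun s => stdCdf 0 + ∫ u in (0:ℝ)..s, stdPdf u) (stdPdf t) t := by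
    have := (intervalIntegral.integral_hasDerivAt_right
      (integrable_stdPdf.intervalIntegrable (a := 0) (b := t))
      (continuous_stdPdf.stronglyMeasurableAtFilter _ _)
      continuous_stdPdf.continuousAt)
    simpa using this
  exact hd.congr_of_eventuallyEq (Filter.Eventually.of_forall h)

lemma continuous_stdCdf : Continuous stdCdf :=
  continuous_iff_continuousAt.2 fun t => (hasDerivAt_stdCdf t).continuousAt


lemma gauss_conv (p q : ℝ) :
    ∫ x, stdPdf (p + q * x) * stdPdf x =
      (Real.sqrt (1 + q ^ 2))⁻¹ * stdPdf (p / Real.sqrt (1 + q ^ 2)) := by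
  have hc2 : (0:ℝ) < 1 + q ^ 2 := by positivity
  set c := Real.sqrt (1 + q ^ 2) with hc
  have hcpos : 0 < c := Real.sqrt_pos.2 hc2
  have hcsq : c ^ 2 = 1 + q ^ 2 := Real.sq_sqrt hc2.le
  set m := p * q / (1 + q ^ 2) with hm
  have hconst : (Real.sqrt (2 * Real.pi))⁻¹ * (Real.sqrt (2 * Real.pi))⁻¹ = (2 * Real.pi)⁻¹ := by
    rw [← mul_inv, Real.mul_self_sqrt (by positivity)]
  have key : ∀ x, stdPdf (p + q * x) * stdPdf x =
      ((2 * Real.pi)⁻¹ * Real.exp (-p ^ 2 / (2 * (1 + q ^ 2)))) *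
        Real.exp (-((1 + q ^ 2) / 2) * (x + m) ^ 2) := by
    intro x
    have hexp : -(p + q * x) ^ 2 / 2 + -x ^ 2 / 2 =
        -p ^ 2 / (2 * (1 + q ^ 2)) + -((1 + q ^ 2) / 2) * (x + m) ^ 2 := by
      rw [hm]; field_simp; ring
    unfold stdPdf
    rw [show ((Real.sqrt (2 * Real.pi))⁻¹ * Real.exp (-(p + q * x) ^ 2 / 2)) *
        ((Real.sqrt (2 * Real.pi))⁻¹ * Real.exp (-x ^ 2 / 2)) =
        ((Real.sqrt (2 * Real.pi))⁻¹ * (Real.sqrt (2 * Real.pi))⁻¹) *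
        (Real.exp (-(p + q * x) ^ 2 / 2) * Real.exp (-x ^ 2 / 2)) by ring,
      hconst, ← Real.exp_add, hexp, Real.exp_add, mul_assoc]
  rw [MeasureTheory.integral_congr_ae (Filter.Eventually.of_forall key),
    MeasureTheory.integral_const_mul,
    MeasureTheory.integral_add_right_eq_self (fun x => Real.exp (-((1 + q ^ 2) / 2) * x ^ 2)) m,
    integral_gaussian]
  have h1 : Real.sqrt (Real.pi / ((1 + q ^ 2) / 2)) = Real.sqrt (2 * Real.pi) / c := by
    rw [show Real.pi / ((1 + q ^ 2) / 2) = (2 * Real.pi) / (1 + q ^ 2) by field_simp,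
      Real.sqrt_div (by positivity), hc]
  rw [h1]
  unfold stdPdf
  rw [show -(p / Real.sqrt (1 + q ^ 2)) ^ 2 / 2 = -p ^ 2 / (2 * (1 + q ^ 2)) by rw [div_pow, hcsq, neg_div, neg_div, div_div]; ring_nf]
  have h2 : Real.sqrt (2 * Real.pi) ≠ 0 := sqrt2pi_pos.ne'
  rw [← hconst]
  field_simp

lemma integrable_cdfmul (g : ℝ → ℝ) (hg : Continuous g) (hb : ∀ x, |g x| ≤ 1) :
    Integrable (fun x => g x * stdPdf x) := by
  refine Integrable.mono integrable_stdPdf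
    ((hg.mul continuous_stdPdf).aestronglyMeasurable) ?_
  refine Filter.Eventually.of_forall fun x => ?_
  rw [Real.norm_eq_abs, Real.norm_eq_abs, abs_mul, abs_of_pos (stdPdf_pos x)]
  calc |g x| * stdPdf x ≤ 1 * stdPdf x := by
        exact mul_le_mul_of_nonneg_right (hb x) (stdPdf_pos x).le
    _ = stdPdf x := one_mul _

lemma hasDerivAt_cdf_integral (q : ℝ) (p₀ : ℝ) :
    HasDerivAt (fun p => ∫ x, stdCdf (p + q * x) * stdPdf x)
      (∫ x, stdPdf (p₀ + q * x) * stdPdf x) p₀ := by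
  have key := hasDerivAt_integral_of_dominated_loc_of_deriv_le (μ := volume)
    (F := fun p x => stdCdf (p + q * x) * stdPdf x)
    (F' := fun p x => stdPdf (p + q * x) * stdPdf x)
    (x₀ := p₀) (bound := fun x => (Real.sqrt (2 * Real.pi))⁻¹ * stdPdf x)
    (s := Metric.ball _ 1) (Metric.ball_mem_nhds _ one_pos)
    (Filter.Eventually.of_forall fun p =>
      ((continuous_stdCdf.comp (by continuity)).mul continuous_stdPdf).aestronglyMeasurable)
    (integrable_cdfmul _ (continuous_stdCdf.comp (by continuity))
      (fun x => abs_le.2 ⟨by linarith [stdCdf_nonneg (p₀ + q*x)], stdCdf_le_one _⟩))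
    ((continuous_stdPdf.comp (by continuity)).mul continuous_stdPdf).aestronglyMeasurable
    (Filter.Eventually.of_forall fun x p _ => by
      rw [Real.norm_eq_abs, abs_mul, abs_of_pos (stdPdf_pos _), abs_of_pos (stdPdf_pos _)]
      exact mul_le_mul_of_nonneg_right (stdPdf_le _) (stdPdf_pos x).le)
    (integrable_stdPdf.const_mul _)
    (Filter.Eventually.of_forall fun x p _ => by
      have h1 : HasDerivAt (fun p : ℝ => p + q * x) 1 p := by
        simpa using (hasDerivAt_id p).add_const (q * x)
      have h2 : HasDerivAt (fun p => stdCdf (p + q * x)) (stdPdf (p + q * x)) p := by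
        simpa [Function.comp_def] using (hasDerivAt_stdCdf (p + q * x)).comp p h1
      exact h2.mul_const _)
  exact key.2

lemma cdf_conv (p q : ℝ) :
    ∫ x, stdCdf (p + q * x) * stdPdf x = stdCdf (p / Real.sqrt (1 + q ^ 2)) := by
  have hc2 : (0:ℝ) < 1 + q ^ 2 := by positivity
  set c := Real.sqrt (1 + q ^ 2) with hc
  have hcpos : 0 < c := Real.sqrt_pos.2 hc2
  -- the difference has zero derivative
  have hderiv : ∀ p : ℝ, HasDerivAt
      (fun p => (∫ x, stdCdf (p + q * x) * stdPdf x) - stdCdf (p / c)) 0 p := by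
    intro p
    have h1 := hasDerivAt_cdf_integral q p
    have h2 : HasDerivAt (fun p : ℝ => stdCdf (p / c)) (stdPdf (p / c) * c⁻¹) p := by
      have hin : HasDerivAt (fun p : ℝ => p / c) c⁻¹ p := by
        simpa using (hasDerivAt_id p).div_const c
      simpa [Function.comp_def] using (hasDerivAt_stdCdf (p / c)).comp p hin
    have h3 := h1.sub h2
    rw [gauss_conv, ← hc] at h3
    simpa [mul_comm, sub_self, Pi.sub_def] using h3
  have hconst : ∀ p : ℝ, (∫ x, stdCdf (p + q * x) * stdPdf x) - stdCdf (p / c) =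
      (∫ x, stdCdf (0 + q * x) * stdPdf x) - stdCdf (0 / c) := by
    intro p
    exact is_const_of_deriv_eq_zero
      (fun y => (hderiv y).differentiableAt)
      (fun y => (hderiv y).deriv) p 0
  -- value at 0
  have hzero : ∫ x, stdCdf (q * x) * stdPdf x = 1/2 := by
    have hrefl : ∫ x, stdCdf (q * x) * stdPdf x = ∫ x, stdCdf (q * -x) * stdPdf (-x) := by
      rw [← MeasureTheory.integral_neg_eq_self]
    have hint : Integrable (fun x => stdCdf (q * x) * stdPdf x) :=
      integrable_cdfmul _ (continuous_stdCdf.comp (by continuity))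
        (fun x => abs_le.2 ⟨by linarith [stdCdf_nonneg (q*x)], stdCdf_le_one _⟩)
    have h2 : ∫ x, stdCdf (q * -x) * stdPdf (-x) = ∫ x, (1 - stdCdf (q * x)) * stdPdf x := by
      congr 1; funext x
      rw [stdPdf_neg, show q * -x = -(q * x) by ring, stdCdf_neg_eq]
    have h3 : ∫ x, (1 - stdCdf (q * x)) * stdPdf x =
        1 - ∫ x, stdCdf (q * x) * stdPdf x := by
      have : (fun x => (1 - stdCdf (q * x)) * stdPdf x) =
          fun x => stdPdf x - stdCdf (q * x) * stdPdf x := by funext x; ring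
      rw [this, MeasureTheory.integral_sub integrable_stdPdf hint, integral_stdPdf]
    rw [h2, h3] at hrefl; linarith
  have := hconst p
  rw [zero_div, stdCdf_zero] at this
  simp only [zero_add] at this
  rw [hzero] at this
  linarith

lemma cdf_pdf_conv (a b : ℝ) :
    ∫ x, stdCdf (a + b * x) * (stdPdf (a + b * x) * stdPdf x) =
      (Real.sqrt (1 + b ^ 2))⁻¹ * stdPdf (a / Real.sqrt (1 + b ^ 2)) *
        stdCdf (a / (Real.sqrt (1 + b ^ 2) * Real.sqrt (1 + 2 * b ^ 2))) := by
  have hc2 : (0:ℝ) < 1 + b ^ 2 := by positivity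
  set c := Real.sqrt (1 + b ^ 2) with hc
  have hcpos : 0 < c := Real.sqrt_pos.2 hc2
  have hcsq : c ^ 2 = 1 + b ^ 2 := Real.sq_sqrt hc2.le
  have hcne : c ≠ 0 := hcpos.ne'
  -- pointwise factorization
  have key : ∀ x, stdPdf (a + b * x) * stdPdf x =
      stdPdf (a / c) * stdPdf (c * x + a * b / c) := by
    intro x
    unfold stdPdf
    rw [show ((Real.sqrt (2 * Real.pi))⁻¹ * Real.exp (-(a + b * x) ^ 2 / 2)) *
        ((Real.sqrt (2 * Real.pi))⁻¹ * Real.exp (-x ^ 2 / 2)) =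
        ((Real.sqrt (2 * Real.pi))⁻¹ * (Real.sqrt (2 * Real.pi))⁻¹) *
        (Real.exp (-(a + b * x) ^ 2 / 2) * Real.exp (-x ^ 2 / 2)) by ring,
      show ((Real.sqrt (2 * Real.pi))⁻¹ * Real.exp (-(a / c) ^ 2 / 2)) *
        ((Real.sqrt (2 * Real.pi))⁻¹ * Real.exp (-(c * x + a * b / c) ^ 2 / 2)) =
        ((Real.sqrt (2 * Real.pi))⁻¹ * (Real.sqrt (2 * Real.pi))⁻¹) *
        (Real.exp (-(a / c) ^ 2 / 2) * Real.exp (-(c * x + a * b / c) ^ 2 / 2)) by ring,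
      ← Real.exp_add, ← Real.exp_add]
    congr 1
    have hpoly : c^2*(a+b*x)^2 + c^2*x^2 = a^2 + (c^2*x+a*b)^2 := by rw [hcsq]; ring
    congr 1
    field_simp
    linear_combination (-1 : ℝ) * hpoly
  have step1 : ∫ x, stdCdf (a + b * x) * (stdPdf (a + b * x) * stdPdf x) =
      stdPdf (a / c) * ∫ x, stdCdf (a + b * x) * stdPdf (c * x + a * b / c) := by
    rw [← MeasureTheory.integral_const_mul]
    congr 1; funext x; rw [key x]; ring
  -- change of variables
  set g : ℝ → ℝ := fun y => stdCdf ((a - a * b ^ 2 / c ^ 2) + (b / c) * y) * stdPdf y with hg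
  have hgx : ∀ x, stdCdf (a + b * x) * stdPdf (c * x + a * b / c) = g (c * x + a * b / c) := by
    intro x
    rw [hg]
    congr 2
    field_simp
    ring
  have step2 : ∫ x, stdCdf (a + b * x) * stdPdf (c * x + a * b / c) = c⁻¹ * ∫ y, g y := by
    rw [MeasureTheory.integral_congr_ae (Filter.Eventually.of_forall hgx)]
    have h1 : ∫ x, g (c * x + a * b / c) = ∫ x, (fun y => g (y + a * b / c)) (c * x) := by rfl
    rw [h1, MeasureTheory.Measure.integral_comp_mul_left (fun y => g (y + a * b / c)) c,
      MeasureTheory.integral_add_right_eq_self g (a * b / c)]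
    rw [abs_of_pos (inv_pos.2 hcpos), smul_eq_mul]
  have step3 : ∫ y, g y = stdCdf (a / (c * Real.sqrt (1 + 2 * b ^ 2))) := by
    rw [hg, cdf_conv]
    congr 1
    have h2 : Real.sqrt (1 + (b / c) ^ 2) = Real.sqrt (1 + 2 * b ^ 2) / c := by
      rw [show 1 + (b / c) ^ 2 = (1 + 2 * b ^ 2) / c ^ 2 by
          rw [div_pow]; field_simp; nlinarith [hcsq],
        Real.sqrt_div (by positivity), Real.sqrt_sq hcpos.le]
    rw [h2]
    have h3 : a - a * b ^ 2 / c ^ 2 = a / c ^ 2 := by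
      rw [hcsq]; field_simp; ring
    rw [h3]
    have hs : Real.sqrt (1 + 2 * b ^ 2) ≠ 0 := (Real.sqrt_pos.2 (by positivity)).ne'
    field_simp
  rw [step1, step2, step3]; ring

lemma scaled_gauss_int (h k : ℝ) :
    h * ∫ x in (0:ℝ)..k, Real.exp (-(h * x) ^ 2 / 2) =
      Real.sqrt (2 * Real.pi) * (stdCdf (h * k) - 1 / 2) := by
  rcases eq_or_ne h 0 with rfl | hne
  · simp [stdCdf_zero]
  · rw [intervalIntegral.integral_comp_mul_left (fun u => Real.exp (-u ^ 2 / 2)) hne]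
    rw [smul_eq_mul, ← mul_assoc, mul_inv_cancel₀ hne, one_mul, mul_zero]
    have : ∀ u, Real.exp (-u ^ 2 / 2) = Real.sqrt (2 * Real.pi) * stdPdf u := by
      intro u; unfold stdPdf; rw [← mul_assoc, mul_inv_cancel₀ sqrt2pi_pos.ne', one_mul]
    rw [intervalIntegral.integral_congr (g := fun u => Real.sqrt (2 * Real.pi) * stdPdf u)
      (fun u _ => this u)]
    rw [intervalIntegral.integral_const_mul]
    congr 1
    rw [← intervalIntegral.integral_Iic_sub_Iic integrable_stdPdf.integrableOn
      integrable_stdPdf.integrableOn]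
    have h0 : (∫ x in Set.Iic (0:ℝ), stdPdf x) = 1/2 := stdCdf_zero
    rw [h0]
    rfl

lemma owenT_hasDerivAt (k : ℝ) (hk : 0 < k) (h₀ : ℝ) :
    HasDerivAt (fun h => owenT h k) (-(stdPdf h₀ * (stdCdf (h₀ * k) - 1 / 2))) h₀ := by
  have hIoc : ∀ h : ℝ, owenT h k =
      (2 * Real.pi)⁻¹ * ∫ x in Set.Ioc (0:ℝ) k, Real.exp (-h ^ 2 * (1 + x ^ 2) / 2) / (1 + x ^ 2) := by
    intro h; unfold owenT; rw [intervalIntegral.integral_of_le hk.le]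
  have hpos : ∀ x : ℝ, (0:ℝ) < 1 + x ^ 2 := fun x => by positivity
  have key := hasDerivAt_integral_of_dominated_loc_of_deriv_le
    (μ := volume.restrict (Set.Ioc (0:ℝ) k))
    (F := fun h x => Real.exp (-h ^ 2 * (1 + x ^ 2) / 2) / (1 + x ^ 2))
    (F' := fun h x => -h * Real.exp (-h ^ 2 * (1 + x ^ 2) / 2))
    (x₀ := h₀) (bound := fun _ => |h₀| + 1) (s := Metric.ball _ 1) (Metric.ball_mem_nhds _ one_pos)
    (Filter.Eventually.of_forall fun h => Continuous.aestronglyMeasurable (by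
      have : Continuous fun x : ℝ => Real.exp (-h ^ 2 * (1 + x ^ 2) / 2) / (1 + x ^ 2) := by
        apply Continuous.div (by continuity) (by continuity) (fun x => (hpos x).ne')
      exact this))
    (by
      apply Integrable.mono' (g := fun _ => (1:ℝ))
        (integrable_const 1)
      · exact Continuous.aestronglyMeasurable (Continuous.div (by continuity) (by continuity)
          (fun x => (hpos x).ne'))
      · refine Filter.Eventually.of_forall fun x => ?_
        rw [Real.norm_eq_abs, abs_div, abs_of_pos (hpos x), abs_of_pos (Real.exp_pos _)]
        rw [div_le_one (hpos x)]
        calc Real.exp (-h₀ ^ 2 * (1 + x ^ 2) / 2) ≤ 1 :=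
              Real.exp_le_one_iff.2 (by nlinarith [sq_nonneg h₀, sq_nonneg x])
          _ ≤ 1 + x ^ 2 := by nlinarith [sq_nonneg x])
    (Continuous.aestronglyMeasurable (by continuity))
    (Filter.Eventually.of_forall fun x h hball => by
      rw [Real.norm_eq_abs, abs_mul, abs_neg, abs_of_pos (Real.exp_pos _)]
      have h1 : |h| ≤ |h₀| + 1 := by
        have := mem_ball_iff_norm.1 hball
        rw [Real.norm_eq_abs] at this
        calc |h| = |h₀ + (h - h₀)| := by ring_nf
          _ ≤ |h₀| + |h - h₀| := abs_add_le _ _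
          _ ≤ |h₀| + 1 := by linarith [this.le]
      calc |h| * Real.exp (-h ^ 2 * (1 + x ^ 2) / 2) ≤ |h| * 1 := by
            exact mul_le_mul_of_nonneg_left
              (Real.exp_le_one_iff.2 (by nlinarith [sq_nonneg h, sq_nonneg x])) (abs_nonneg h)
        _ = |h| := mul_one _
        _ ≤ |h₀| + 1 := h1)
    (integrableOn_const (measure_Ioc_lt_top).ne)
    (Filter.Eventually.of_forall fun x h _ => by
      have hu : HasDerivAt (fun h : ℝ => -h ^ 2 * (1 + x ^ 2) / 2)
          (-h * (1 + x ^ 2)) h := by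
        have : HasDerivAt (fun h : ℝ => h ^ 2) (2 * h) h := by
          simpa using hasDerivAt_pow 2 h
        have := ((this.neg.mul_const (1 + x ^ 2)).div_const 2)
        exact this.congr_deriv (by ring)
      have := (hu.exp).div_const (1 + x ^ 2)
      exact this.congr_deriv (by rw [mul_div_assoc, mul_div_cancel_right₀ _ (hpos x).ne']; ring))
  have main := (key.2).const_mul ((2 * Real.pi)⁻¹)
  have heq : (fun h => (2 * Real.pi)⁻¹ *
      ∫ x in Set.Ioc (0:ℝ) k, Real.exp (-h ^ 2 * (1 + x ^ 2) / 2) / (1 + x ^ 2)) =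
      fun h => owenT h k := by funext h; rw [hIoc h]
  rw [heq] at main
  refine main.congr_deriv ?_
  -- identify the derivative value
  rw [← intervalIntegral.integral_of_le hk.le]
  have hsplit : ∀ x : ℝ, -h₀ * Real.exp (-h₀ ^ 2 * (1 + x ^ 2) / 2) =
      -h₀ * Real.exp (-h₀ ^ 2 / 2) * Real.exp (-(h₀ * x) ^ 2 / 2) := by
    intro x
    rw [mul_assoc, ← Real.exp_add]
    congr 2
    ring
  rw [intervalIntegral.integral_congr (fun x _ => hsplit x), intervalIntegral.integral_const_mul]
  have := scaled_gauss_int h₀ k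
  have h2 : (2 * Real.pi)⁻¹ * Real.sqrt (2 * Real.pi) = (Real.sqrt (2 * Real.pi))⁻¹ := by
    rw [show (2:ℝ) * Real.pi = Real.sqrt (2 * Real.pi) * Real.sqrt (2 * Real.pi) from
      (Real.mul_self_sqrt (by positivity)).symm]
    field_simp
    rw [Real.sqrt_sq (Real.sqrt_nonneg _)]
  unfold stdPdf
  calc (2 * Real.pi)⁻¹ * (-h₀ * Real.exp (-h₀ ^ 2 / 2) * ∫ x in (0:ℝ)..k, Real.exp (-(h₀ * x) ^ 2 / 2))
      = -(2 * Real.pi)⁻¹ * Real.exp (-h₀ ^ 2 / 2) *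
        (h₀ * ∫ x in (0:ℝ)..k, Real.exp (-(h₀ * x) ^ 2 / 2)) := by ring
    _ = -(2 * Real.pi)⁻¹ * Real.exp (-h₀ ^ 2 / 2) *
        (Real.sqrt (2 * Real.pi) * (stdCdf (h₀ * k) - 1 / 2)) := by rw [this]
    _ = -((Real.sqrt (2 * Real.pi))⁻¹ * Real.exp (-h₀ ^ 2 / 2) * (stdCdf (h₀ * k) - 1 / 2)) := by
        rw [← h2]; ring

lemma tendsto_stdCdf_atBot : Tendsto stdCdf atBot (nhds 0) := by
  have h0 : (0:ℝ) = ∫ _x : ℝ, (0:ℝ) := by simp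
  rw [h0]
  have heq : ∀ t : ℝ, stdCdf t = ∫ x, Set.indicator (Set.Iic t) stdPdf x := by
    intro t; unfold stdCdf; rw [MeasureTheory.integral_indicator measurableSet_Iic]
  rw [show stdCdf = fun t => ∫ x, Set.indicator (Set.Iic t) stdPdf x from funext heq]
  apply MeasureTheory.tendsto_integral_filter_of_dominated_convergence (bound := stdPdf)
  · exact Filter.Eventually.of_forall fun t =>
      (integrable_stdPdf.aestronglyMeasurable).indicator measurableSet_Iic
  · refine Filter.Eventually.of_forall fun t => Filter.Eventually.of_forall fun x => ?_
    calc ‖Set.indicator (Set.Iic t) stdPdf x‖ ≤ ‖stdPdf x‖ := norm_indicator_le_norm_self _ _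
      _ = stdPdf x := abs_of_pos (stdPdf_pos x)
  · exact integrable_stdPdf
  · refine Filter.Eventually.of_forall fun x => ?_
    apply Filter.Tendsto.congr' _ tendsto_const_nhds
    filter_upwards [eventually_le_atBot (x - 1)] with t ht
    have : x ∉ Set.Iic t := by simp only [Set.mem_Iic]; linarith
    exact (Set.indicator_of_notMem this stdPdf).symm

lemma owenT_bound (h k : ℝ) (hk : 0 < k) :
    |owenT h k| ≤ (2 * Real.pi)⁻¹ * (Real.exp (-h ^ 2 / 2) * k) := by
  unfold owenT
  rw [abs_mul, abs_of_pos (by positivity : (0:ℝ) < (2 * Real.pi)⁻¹)]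
  apply mul_le_mul_of_nonneg_left _ (by positivity)
  have := intervalIntegral.norm_integral_le_of_norm_le_const
    (C := Real.exp (-h ^ 2 / 2)) (a := (0:ℝ)) (b := k)
    (f := fun x => Real.exp (-h ^ 2 * (1 + x ^ 2) / 2) / (1 + x ^ 2)) ?_
  · rw [Real.norm_eq_abs] at this
    calc |∫ x in (0:ℝ)..k, Real.exp (-h ^ 2 * (1 + x ^ 2) / 2) / (1 + x ^ 2)|
        ≤ Real.exp (-h ^ 2 / 2) * |k - 0| := this
      _ = Real.exp (-h ^ 2 / 2) * k := by rw [sub_zero, abs_of_pos hk]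
  · intro x hx
    have hpos : (0:ℝ) < 1 + x ^ 2 := by positivity
    rw [Real.norm_eq_abs, abs_div, abs_of_pos (Real.exp_pos _), abs_of_pos hpos]
    calc Real.exp (-h ^ 2 * (1 + x ^ 2) / 2) / (1 + x ^ 2)
        ≤ Real.exp (-h ^ 2 * (1 + x ^ 2) / 2) / 1 := by
          apply div_le_div_of_nonneg_left (Real.exp_pos _).le one_pos
          nlinarith [sq_nonneg x]
      _ = Real.exp (-h ^ 2 * (1 + x ^ 2) / 2) := div_one _
      _ ≤ Real.exp (-h ^ 2 / 2) := Real.exp_le_exp.2 (by nlinarith [sq_nonneg h, sq_nonneg x, sq_nonneg (h*x)])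

theorem stmt_1 (a b : ℝ) :
    ∫ x : ℝ, stdCdf (a + b * x) ^ 2 * stdPdf x =
      stdCdf (a / Real.sqrt (1 + b ^ 2)) -
        2 * owenT (a / Real.sqrt (1 + b ^ 2)) (1 / Real.sqrt (1 + 2 * b ^ 2)) := by
  have hc2 : (0:ℝ) < 1 + b ^ 2 := by positivity
  have hs2 : (0:ℝ) < 1 + 2 * b ^ 2 := by positivity
  set c := Real.sqrt (1 + b ^ 2) with hc
  set s := Real.sqrt (1 + 2 * b ^ 2) with hs
  have hcpos : 0 < c := Real.sqrt_pos.2 hc2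
  have hspos : 0 < s := Real.sqrt_pos.2 hs2
  set k : ℝ := 1 / s with hk
  have hkpos : 0 < k := by positivity
  set F : ℝ → ℝ := fun t => ∫ x, stdCdf (t + b * x) ^ 2 * stdPdf x with hF
  set G : ℝ → ℝ := fun t => stdCdf (t / c) - 2 * owenT (t / c) k with hG
  -- derivative of F
  have hcontc : ∀ p : ℝ, Continuous fun x : ℝ => stdCdf (p + b * x) := fun p =>
    continuous_stdCdf.comp (by continuity)
  have hcontp : ∀ p : ℝ, Continuous fun x : ℝ => stdPdf (p + b * x) := fun p =>
    continuous_stdPdf.comp (by continuity)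
  have hF' : ∀ t, HasDerivAt F (2 * (c⁻¹ * stdPdf (t / c) * stdCdf (t / (c * s)))) t := by
    intro t
    have key := hasDerivAt_integral_of_dominated_loc_of_deriv_le (μ := volume)
      (F := fun t x => stdCdf (t + b * x) ^ 2 * stdPdf x)
      (F' := fun t x => (2 * stdCdf (t + b * x) * stdPdf (t + b * x)) * stdPdf x)
      (x₀ := t) (bound := fun x => 2 * (Real.sqrt (2 * Real.pi))⁻¹ * stdPdf x)
      (s := Metric.ball _ 1) (Metric.ball_mem_nhds _ one_pos)
      (Filter.Eventually.of_forall fun p => Continuous.aestronglyMeasurable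
        (((hcontc p).pow 2).mul continuous_stdPdf))
      (by
        apply Integrable.mono' (integrable_stdPdf)
          ((((hcontc t).pow 2).mul continuous_stdPdf).aestronglyMeasurable)
        refine Filter.Eventually.of_forall fun x => ?_
        simp only [Pi.mul_apply, Pi.pow_apply]
        rw [Real.norm_eq_abs, abs_mul, abs_of_pos (stdPdf_pos x), abs_pow]
        have h1 : |stdCdf (t + b * x)| ≤ 1 :=
          abs_le.2 ⟨by linarith [stdCdf_nonneg (t + b*x)], stdCdf_le_one _⟩
        have hsq : |stdCdf (t + b * x)| ^ 2 ≤ 1 := pow_le_one₀ (abs_nonneg _) h1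
        nlinarith [stdPdf_pos x])
      (Continuous.aestronglyMeasurable
        (((continuous_const.mul (hcontc t)).mul (hcontp t)).mul continuous_stdPdf))
      (Filter.Eventually.of_forall fun x p _ => by
        rw [Real.norm_eq_abs, abs_mul, abs_of_pos (stdPdf_pos x), abs_mul,
          abs_mul, abs_of_pos (stdPdf_pos (p + b * x))]
        have h1 : |stdCdf (p + b * x)| ≤ 1 :=
          abs_le.2 ⟨by linarith [stdCdf_nonneg (p + b*x)], stdCdf_le_one _⟩
        have h2 := stdPdf_le (p + b * x)
        have h3 := stdPdf_pos x
        have h4 := stdPdf_pos (p + b * x)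
        have h5 : (0:ℝ) < (Real.sqrt (2 * Real.pi))⁻¹ := by
          have := stdPdf_le 0; have := stdPdf_pos 0; linarith
        rw [abs_of_nonneg (by norm_num : (0:ℝ) ≤ 2)]
        have h6 : |stdCdf (p + b * x)| * stdPdf (p + b * x) ≤ (Real.sqrt (2 * Real.pi))⁻¹ := by
          nlinarith [abs_nonneg (stdCdf (p + b * x))]
        nlinarith [abs_nonneg (stdCdf (p + b * x))])
      ((integrable_stdPdf.const_mul _))
      (Filter.Eventually.of_forall fun x p _ => by
        have h1 : HasDerivAt (fun p : ℝ => p + b * x) 1 p := by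
          simpa using (hasDerivAt_id p).add_const (b * x)
        have h2 : HasDerivAt (fun p => stdCdf (p + b * x)) (stdPdf (p + b * x)) p := by
          simpa [Function.comp_def] using (hasDerivAt_stdCdf (p + b * x)).comp p h1
        have h3 := (h2.pow 2).mul_const (stdPdf x)
        exact h3.congr_deriv (by ring))
    have hval : (∫ x, (2 * stdCdf (t + b * x) * stdPdf (t + b * x)) * stdPdf x) =
        2 * (c⁻¹ * stdPdf (t / c) * stdCdf (t / (c * s))) := by
      have : (fun x => (2 * stdCdf (t + b * x) * stdPdf (t + b * x)) * stdPdf x) =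
          fun x => 2 * (stdCdf (t + b * x) * (stdPdf (t + b * x) * stdPdf x)) := by
        funext x; ring
      rw [this, MeasureTheory.integral_const_mul, cdf_pdf_conv t b, ← hc, ← hs]
    rw [hval] at key
    exact key.2
  -- derivative of G
  have hG' : ∀ t, HasDerivAt G (2 * (c⁻¹ * stdPdf (t / c) * stdCdf (t / (c * s)))) t := by
    intro t
    have hdiv : HasDerivAt (fun t : ℝ => t / c) c⁻¹ t := by
      simpa using (hasDerivAt_id t).div_const c
    have h1 : HasDerivAt (fun t : ℝ => stdCdf (t / c)) (stdPdf (t / c) * c⁻¹) t := by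
      simpa [Function.comp_def] using (hasDerivAt_stdCdf (t / c)).comp t hdiv
    have h2 : HasDerivAt (fun t : ℝ => owenT (t / c) k)
        (-(stdPdf (t / c) * (stdCdf ((t / c) * k) - 1 / 2)) * c⁻¹) t :=
      HasDerivAt.comp (h₂ := fun h => owenT h k) t (owenT_hasDerivAt k hkpos (t / c)) hdiv
    have h3 := h1.sub ((h2.const_mul 2))
    have harg : (t / c) * k = t / (c * s) := by
      rw [hk, div_mul_div_comm, mul_one]
    rw [harg] at h3
    exact h3.congr_deriv (by ring)
  -- H := F - G is constant
  have hH : ∀ t, F t - G t = F 0 - G 0 := by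
    intro t
    exact is_const_of_deriv_eq_zero
      (fun y => ((hF' y).sub (hG' y)).differentiableAt)
      (fun y => by
        have := ((hF' y).sub (hG' y))
        simpa using this.deriv) t 0
  -- limits at -infty
  have hFlim : Tendsto F atBot (nhds 0) := by
    have h0 : (0:ℝ) = ∫ _x : ℝ, (0:ℝ) := by simp
    rw [h0]
    apply MeasureTheory.tendsto_integral_filter_of_dominated_convergence (bound := stdPdf)
    · exact Filter.Eventually.of_forall fun t => Continuous.aestronglyMeasurable
        (((hcontc t).pow 2).mul continuous_stdPdf)
    · refine Filter.Eventually.of_forall fun t => Filter.Eventually.of_forall fun x => ?_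
      rw [Real.norm_eq_abs, abs_mul, abs_of_pos (stdPdf_pos x), abs_pow]
      have h1 : |stdCdf (t + b * x)| ≤ 1 :=
        abs_le.2 ⟨by linarith [stdCdf_nonneg (t + b*x)], stdCdf_le_one _⟩
      have hsq : |stdCdf (t + b * x)| ^ 2 ≤ 1 := pow_le_one₀ (abs_nonneg _) h1
      nlinarith [stdPdf_pos x]
    · exact integrable_stdPdf
    · refine Filter.Eventually.of_forall fun x => ?_
      have h1 : Tendsto (fun t : ℝ => t + b * x) atBot atBot :=
        tendsto_atBot_add_const_right _ _ tendsto_id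
      have h2 : Tendsto (fun t : ℝ => stdCdf (t + b * x)) atBot (nhds 0) :=
        tendsto_stdCdf_atBot.comp h1
      have h3 : Tendsto (fun t : ℝ => stdCdf (t + b * x) ^ 2) atBot (nhds 0) := by
        have := h2.mul h2
        simpa [sq] using this
      simpa using h3.mul_const (stdPdf x)
  have hGlim : Tendsto G atBot (nhds 0) := by
    have hdivlim : Tendsto (fun t : ℝ => t / c) atBot atBot :=
      tendsto_id.atBot_div_const hcpos
    have h1 : Tendsto (fun t : ℝ => stdCdf (t / c)) atBot (nhds 0) :=
      tendsto_stdCdf_atBot.comp hdivlim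
    have h2 : Tendsto (fun t : ℝ => owenT (t / c) k) atBot (nhds 0) := by
      apply squeeze_zero_norm (fun t : ℝ => owenT_bound (t / c) k hkpos)
      · have hsq : Tendsto (fun t : ℝ => -(t / c) ^ 2 / 2) atBot atBot := by
          apply Tendsto.atBot_div_const two_pos
          apply tendsto_neg_atTop_atBot.comp
          have habs : Tendsto (fun t : ℝ => |t / c|) atBot atTop :=
            tendsto_abs_atBot_atTop.comp hdivlim
          have := (tendsto_pow_atTop (n := 2) (by norm_num)).comp habs
          refine this.congr fun t => ?_
          simp [sq_abs]
        have hexp : Tendsto (fun t : ℝ => Real.exp (-(t / c) ^ 2 / 2)) atBot (nhds 0) :=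
          Real.tendsto_exp_atBot.comp hsq
        have := (hexp.mul_const k).const_mul ((2 * Real.pi)⁻¹)
        simpa using this
    have := h1.sub ((h2.const_mul 2))
    simpa using this
  have hHlim : Tendsto (fun t => F t - G t) atBot (nhds 0) := by
    simpa using hFlim.sub hGlim
  have hHlim' : Tendsto (fun t => F t - G t) atBot (nhds (F 0 - G 0)) := by
    have : (fun t => F t - G t) = fun _ => F 0 - G 0 := funext hH
    rw [this]
    exact tendsto_const_nhds
  have hzero : F 0 - G 0 = 0 := tendsto_nhds_unique hHlim' hHlim
  have := hH a
  rw [hzero] at this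
  have hFG : F a = G a := by linarith
  rw [hF, hG] at hFG
  exact hFG

end OwenProof
end

section
/- For all real a and γ, ∫_{-∞}^{γ} Φ(f)·φ(f; μ, σ²) df = BvN(μ/√(1+σ²), (γ−μ)/σ; −σ/√(1+σ²)), where φ(·;μ,σ²) is the N(μ,σ²) density. Equivalently, if f ~ N(μ,σ²) and y|f is Bernoulli with success probability Φ(f), then P(y=1, f ≤ γ) = BvN(μ/√(1+σ²), (γ−μ)/σ; −σ/√(1+σ²)). -/
open MeasureTheory Real

lemma image_affine_Iic {c : ℝ} (m v : ℝ) (hc : 0 < c) :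
    (fun t => c * t + m) '' Set.Iic v = Set.Iic (c * v + m) := by
  ext x
  simp only [Set.mem_image, Set.mem_Iic]
  constructor
  · rintro ⟨t, ht, rfl⟩; nlinarith
  · intro hx
    exact ⟨(x - m) / c, by rw [div_le_iff₀ hc]; nlinarith, by field_simp; ring⟩

lemma integral_affine_Iic (g : ℝ → ℝ) {c : ℝ} (m u : ℝ) (hc : 0 < c) :
    ∫ x in Set.Iic u, g ((x - m) / c) / c = ∫ t in Set.Iic ((u - m) / c), g t := by
  have h1 : Set.Iic u = (fun t => c * t + m) '' Set.Iic ((u - m) / c) := by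
    rw [image_affine_Iic m _ hc]
    congr 1
    field_simp
    ring
  rw [h1, integral_image_eq_integral_abs_deriv_smul measurableSet_Iic
      (f' := fun _ => c)
      (fun x _ => by simpa using (((hasDerivAt_id x).const_mul c).add_const m).hasDerivWithinAt)
      (fun a _ b _ hab => by
        simpa [mul_comm] using mul_left_cancel₀ hc.ne' (by linarith : c * a = c * b))]
  refine setIntegral_congr_fun measurableSet_Iic fun t _ => ?_
  have : (c * t + m - m) / c = t := by field_simp; ring
  rw [this, smul_eq_mul, abs_of_pos hc]
  field_simp

lemma sqrt_two_pi_sq : Real.sqrt (2 * Real.pi) ^ 2 = 2 * Real.pi :=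
  Real.sq_sqrt (by positivity)

lemma bvnPdf_decomp {ρ : ℝ} (hρ : ρ ^ 2 < 1) (x y : ℝ) :
    bvnPdf ρ x y
      = stdPdf y * (stdPdf ((x - ρ * y) / Real.sqrt (1 - ρ ^ 2)) / Real.sqrt (1 - ρ ^ 2)) := by
  have h1 : (0:ℝ) < 1 - ρ ^ 2 := by linarith
  have hs : (0:ℝ) < Real.sqrt (1 - ρ ^ 2) := Real.sqrt_pos.mpr h1
  have hs2 : Real.sqrt (1 - ρ ^ 2) ^ 2 = 1 - ρ ^ 2 := Real.sq_sqrt h1.le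
  have hπ : (0:ℝ) < Real.sqrt (2 * Real.pi) := Real.sqrt_pos.mpr (by positivity)
  unfold bvnPdf stdPdf
  rw [show ((Real.sqrt (2*Real.pi))⁻¹ * Real.exp (-y^2/2)) *
      ((Real.sqrt (2*Real.pi))⁻¹ * Real.exp (-((x - ρ*y)/Real.sqrt (1-ρ^2))^2/2) / Real.sqrt (1-ρ^2))
      = (Real.exp (-y^2/2) * Real.exp (-((x - ρ*y)/Real.sqrt (1-ρ^2))^2/2)) /
        (2 * Real.pi * Real.sqrt (1-ρ^2)) by
    rw [eq_div_iff (by positivity)]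
    field_simp
    have hw : (Real.sqrt 2 * Real.sqrt Real.pi) * (Real.sqrt 2 * Real.sqrt Real.pi)
        = 2 * Real.pi := by
      rw [← Real.sqrt_mul (by norm_num : (0:ℝ) ≤ 2)]
      exact Real.mul_self_sqrt (by positivity)
    nlinarith [hw, hs, sqrt_two_pi_sq]]
  rw [← Real.exp_add]
  congr 1
  rw [div_pow, hs2]
  field_simp
  ring

lemma bvnPdf_symm (ρ x y : ℝ) : bvnPdf ρ x y = bvnPdf ρ y x := by
  unfold bvnPdf; ring_nf

lemma stdPdf_nonneg (x : ℝ) : 0 ≤ stdPdf x := by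
  unfold stdPdf; positivity

lemma bvnPdf_integrable {ρ : ℝ} (hρ : ρ ^ 2 < 1) :
    Integrable (fun p : ℝ × ℝ => bvnPdf ρ p.1 p.2) := by
  have h1 : (0:ℝ) < 1 - ρ ^ 2 := by linarith
  have habs : |ρ| < 1 := (sq_lt_one_iff_abs_lt_one ρ).mp hρ
  have habs0 : (0:ℝ) < 1 - |ρ| := by linarith
  set ε : ℝ := (1 - |ρ|) / (2 * (1 - ρ ^ 2)) with hε
  have hε0 : 0 < ε := div_pos habs0 (by positivity)
  have hcont : Continuous fun p : ℝ × ℝ => bvnPdf ρ p.1 p.2 := by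
    unfold bvnPdf
    fun_prop
  have hbound : Integrable (fun p : ℝ × ℝ =>
      (Real.exp (-ε * p.1 ^ 2) * Real.exp (-ε * p.2 ^ 2)) / (2 * Real.pi * Real.sqrt (1 - ρ ^ 2))) := by
    exact ((integrable_exp_neg_mul_sq hε0).mul_prod (integrable_exp_neg_mul_sq hε0)).div_const _
  refine hbound.mono' hcont.aestronglyMeasurable (Filter.Eventually.of_forall fun p => ?_)
  rcases p with ⟨x, y⟩
  have hq : (1 - |ρ|) * (x ^ 2 + y ^ 2) ≤ x ^ 2 - 2 * ρ * x * y + y ^ 2 := by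
    rcases abs_cases ρ with ⟨h, _⟩ | ⟨h, _⟩ <;> rw [h] <;> nlinarith [sq_nonneg (x - y), sq_nonneg (x + y)]
  have hexp : Real.exp (-(x ^ 2 - 2 * ρ * x * y + y ^ 2) / (2 * (1 - ρ ^ 2)))
      ≤ Real.exp (-ε * x ^ 2) * Real.exp (-ε * y ^ 2) := by
    have h2 : (0:ℝ) < 2 * (1 - ρ ^ 2) := by linarith
    rw [← Real.exp_add]
    apply Real.exp_le_exp.mpr
    rw [hε, div_le_iff₀ h2]
    have heq : (-((1 - |ρ|) / (2 * (1 - ρ ^ 2))) * x ^ 2 + -((1 - |ρ|) / (2 * (1 - ρ ^ 2))) * y ^ 2)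
        * (2 * (1 - ρ ^ 2)) = -((1 - |ρ|) * (x ^ 2 + y ^ 2)) := by
      field_simp
      ring
    rw [heq]
    linarith [hq]
  have hnn : 0 ≤ bvnPdf ρ x y := by unfold bvnPdf; positivity
  rw [Real.norm_eq_abs, abs_of_nonneg hnn]
  unfold bvnPdf
  gcongr

theorem stmt_11 (μ σ γ : ℝ) (hσ : 0 < σ) :
    ∫ f in Set.Iic γ, stdCdf f * (stdPdf ((f - μ) / σ) / σ) =
      bvn (μ / Real.sqrt (1 + σ ^ 2)) ((γ - μ) / σ) (-σ / Real.sqrt (1 + σ ^ 2)) := by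
  have hK : (0:ℝ) < 1 + σ ^ 2 := by positivity
  set sK : ℝ := Real.sqrt (1 + σ ^ 2) with hsK
  have hsK0 : 0 < sK := Real.sqrt_pos.mpr hK
  have hsK2 : sK ^ 2 = 1 + σ ^ 2 := Real.sq_sqrt hK.le
  set u : ℝ := μ / sK with hu
  set v : ℝ := (γ - μ) / σ with hv
  set ρ : ℝ := -σ / sK with hρdef
  have hρ2eq : ρ ^ 2 = σ ^ 2 / (1 + σ ^ 2) := by
    rw [hρdef, div_pow, neg_pow, hsK2]
    ring_nf
  have hρ2 : ρ ^ 2 < 1 := by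
    rw [hρ2eq, div_lt_one hK]; linarith
  have h1ρ : 1 - ρ ^ 2 = (1 + σ ^ 2)⁻¹ := by
    rw [hρ2eq]; field_simp; ring
  have hc : Real.sqrt (1 - ρ ^ 2) = sK⁻¹ := by
    rw [h1ρ, Real.sqrt_inv, hsK]
  have hc0 : (0:ℝ) < Real.sqrt (1 - ρ ^ 2) := by rw [hc]; positivity
  -- LHS
  have hLHS : ∫ f in Set.Iic γ, stdCdf f * (stdPdf ((f - μ) / σ) / σ)
      = ∫ t in Set.Iic v, stdCdf (σ * t + μ) * stdPdf t := by
    have hcongr : ∀ f ∈ Set.Iic γ, stdCdf f * (stdPdf ((f - μ) / σ) / σ)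
        = (fun t => stdCdf (σ * t + μ) * stdPdf t) ((f - μ) / σ) / σ := by
      intro f _
      simp only
      rw [mul_div_assoc]
      congr 2
      field_simp
      ring
    rw [setIntegral_congr_fun measurableSet_Iic hcongr,
      integral_affine_Iic (fun t => stdCdf (σ * t + μ) * stdPdf t) μ γ hσ]
  rw [hLHS]
  -- RHS
  rw [show bvn u v ρ = ∫ p : ℝ × ℝ in Set.Iic v ×ˢ Set.Iic u, bvnPdf ρ p.1 p.2 by
    unfold bvn
    rw [Measure.volume_eq_prod]
    rw [← MeasureTheory.MeasurePreserving.setIntegral_preimage_emb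
      Measure.measurePreserving_swap
      MeasurableEquiv.prodComm.measurableEmbedding (fun p : ℝ × ℝ => bvnPdf ρ p.1 p.2)
      (Set.Iic v ×ˢ Set.Iic u)]
    rw [Set.preimage_swap_prod]
    simp only [Prod.fst_swap, Prod.snd_swap]
    exact setIntegral_congr_fun (measurableSet_Iic.prod measurableSet_Iic)
      fun p _ => bvnPdf_symm ρ p.1 p.2]
  rw [Measure.volume_eq_prod, setIntegral_prod _ (by
    rw [← Measure.volume_eq_prod]
    exact (bvnPdf_integrable hρ2).integrableOn)]
  refine setIntegral_congr_fun measurableSet_Iic fun y _ => ?_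
  simp only
  symm
  have hinner : ∀ x : ℝ, bvnPdf ρ y x
      = stdPdf y * (stdPdf ((x - ρ * y) / Real.sqrt (1 - ρ ^ 2)) / Real.sqrt (1 - ρ ^ 2)) :=
    fun x => (bvnPdf_symm ρ y x).trans (bvnPdf_decomp hρ2 x y)
  calc ∫ x in Set.Iic u, bvnPdf ρ y x
      = ∫ x in Set.Iic u,
          stdPdf y * (stdPdf ((x - ρ * y) / Real.sqrt (1 - ρ ^ 2)) / Real.sqrt (1 - ρ ^ 2)) :=
        setIntegral_congr_fun measurableSet_Iic fun x _ => hinner x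
    _ = stdPdf y * ∫ x in Set.Iic u,
          stdPdf ((x - ρ * y) / Real.sqrt (1 - ρ ^ 2)) / Real.sqrt (1 - ρ ^ 2) :=
        integral_const_mul _ _
    _ = stdPdf y * stdCdf ((u - ρ * y) / Real.sqrt (1 - ρ ^ 2)) := by
        rw [integral_affine_Iic stdPdf (ρ * y) u hc0, stdCdf]
    _ = stdCdf (σ * y + μ) * stdPdf y := by
        rw [mul_comm]
        congr 2
        rw [hc, div_inv_eq_mul, hu, hρdef]
        field_simp
        ring
end
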